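/- arXiv:1703.06075 — 4 statements merged into one kernel-verified Lean document; each statement's English description precedes it below -/
import Mathlib

section
/- Let m, n, q be positive odd integers. Then both of the following hold: (i) the series Σ_{k=1}^{∞} F_{nk+mnq} / ( Π_{j=0}^{m} F_{nk+2jnq} ) converges with sum (1 / L_{mnq}) · Σ_{k=1}^{2q} 1 / ( Π_{j=0}^{m−1} F_{nk+2jnq} ); and (ii) the series Σ_{k=1}^{∞} (−1)^{k−1} · F_{nk+mnq} / ( Π_{j=0}^{m} F_{nk+2jnq} ) converges with sum (1 / L_{mnq}) · Σ_{k=1}^{2q} (−1)^{k−1} / ( Π_{j=0}^{m−1} F_{nk+2jnq} ). -/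
open Filter Topology

/-- The Lucas numbers: `L 0 = 2`, `L 1 = 1`, `L (n+2) = L (n+1) + L n`. -/
def lucas : ℕ → ℕ
  | 0 => 2
  | 1 => 1
  | n + 2 => lucas (n + 1) + lucas n

lemma lucas_pos (b : ℕ) : 0 < lucas b := by
  induction b using Nat.twoStepInduction with
  | zero => simp [lucas]
  | one => simp [lucas]
  | more n ih1 ih2 => simp only [lucas]; omega

lemma lucas_add_fib (b : ℕ) : lucas b + Nat.fib b = 2 * Nat.fib (b+1) := by
  induction b using Nat.twoStepInduction with
  | zero => simp [lucas]
  | one => simp [lucas]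
  | more n ih1 ih2 =>
    have e1 : Nat.fib (n+2) = Nat.fib n + Nat.fib (n+1) := Nat.fib_add_two
    have e2 : Nat.fib (n+1+2) = Nat.fib (n+1) + Nat.fib (n+1+1) := Nat.fib_add_two
    simp only [lucas, show n+2+1 = n+1+2 from rfl, show n+1+1 = n+2 from rfl] at *
    omega

lemma lucas_fib (b : ℕ) : (lucas b : ℤ) = 2 * Nat.fib (b+1) - Nat.fib b := by
  have := lucas_add_fib b
  omega

lemma cassini (b : ℕ) : (Nat.fib (b+1) : ℤ)^2 - Nat.fib b * Nat.fib (b+1) - (Nat.fib b : ℤ)^2 = (-1)^b := by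
  induction b with
  | zero => simp
  | succ n ih =>
    rw [Nat.fib_add_two]
    push_cast
    rw [pow_succ]
    linear_combination (-1 : ℤ) * ih

lemma fib_two_mul_int (b : ℕ) : (Nat.fib (2*b) : ℤ) = lucas b * Nat.fib b := by
  rw [Nat.fib_two_mul, lucas_fib]
  have h' : Nat.fib b ≤ Nat.fib (b+1) := Nat.fib_mono (Nat.le_succ b)
  have h : Nat.fib b ≤ 2 * Nat.fib (b+1) := by omega
  push_cast [h]
  ring

lemma fib_two_mul_add_one_int (b : ℕ) :
    (Nat.fib (2*b+1) : ℤ) + (-1)^b = lucas b * Nat.fib (b+1) := by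
  rw [Nat.fib_two_mul_add_one, lucas_fib]
  push_cast
  linear_combination - cassini b

lemma fib_shift (b : ℕ) (hb : Odd b) (a : ℕ) :
    (Nat.fib (a + 2*b) : ℤ) = Nat.fib a + lucas b * Nat.fib (a + b) := by
  have hneg : ((-1 : ℤ))^b = -1 := Odd.neg_one_pow hb
  cases a with
  | zero => simpa using fib_two_mul_int b
  | succ c =>
    have h1 : c + 1 + 2*b = c + 2*b + 1 := by ring
    have h2 : c + 1 + b = c + b + 1 := by ring
    rw [h1, h2, Nat.fib_add c (2*b), Nat.fib_add c b]
    push_cast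
    have e1 := fib_two_mul_int b
    have e2 := fib_two_mul_add_one_int b
    rw [hneg] at e2
    linear_combination (Nat.fib c : ℤ) * e1 + (Nat.fib (c+1) : ℤ) * e2

lemma telescope (g : ℕ → ℝ) (d N : ℕ) (hdN : d ≤ N) :
    ∑ i ∈ Finset.range N, (g i - g (i + d))
      = ∑ i ∈ Finset.range d, g i - ∑ i ∈ Finset.range d, g (N + i) := by
  rw [Finset.sum_sub_distrib]
  have h1 : ∑ i ∈ Finset.range N, g (i + d) = ∑ i ∈ Finset.Ico d (N + d), g i := by
    rw [Finset.sum_Ico_eq_sum_range]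
    simp [add_comm]
  have h2 : ∑ i ∈ Finset.Ico N (N + d), g i = ∑ i ∈ Finset.range d, g (N + i) := by
    rw [Finset.sum_Ico_eq_sum_range]
    simp
  have h3 : ∑ i ∈ Finset.Ico 0 d, g i + ∑ i ∈ Finset.Ico d N, g i
      = ∑ i ∈ Finset.Ico 0 N, g i := Finset.sum_Ico_consecutive _ (Nat.zero_le d) hdN
  have h4 : ∑ i ∈ Finset.Ico d N, g i + ∑ i ∈ Finset.Ico N (N + d), g i
      = ∑ i ∈ Finset.Ico d (N + d), g i :=
    Finset.sum_Ico_consecutive _ hdN (Nat.le_add_right N d)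
  have h2' : ∑ i ∈ Finset.Ico 0 d, g (N + i) = ∑ i ∈ Finset.range d, g (N + i) := by
    rw [Finset.range_eq_Ico]
  rw [h1, Finset.range_eq_Ico, Finset.range_eq_Ico]
  linarith [h2, h3, h4, h2']

lemma fib_tendsto : Tendsto (fun k : ℕ => (Nat.fib k : ℝ)) atTop atTop := by
  apply tendsto_natCast_atTop_atTop.comp
  apply Nat.fib_mono.tendsto_atTop_atTop
  intro b
  exact ⟨max b 5, le_trans (le_max_left b 5) (Nat.le_fib_self (le_max_right b 5))⟩

lemma main_aux (m n q : ℕ) (hm : Odd m) (hn : Odd n) (hq : Odd q)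
    (hm' : 0 < m) (hn' : 0 < n) (hq' : 0 < q)
    (ε : ℕ → ℝ) (hε : ∀ k, 1 ≤ k → ε (k + 2 * q) = ε k) (hεb : ∀ k, |ε k| ≤ 1) :
    Tendsto (fun N => ∑ k ∈ Finset.Icc 1 N,
        ε k * (Nat.fib (n * k + m * n * q) : ℝ) /
          ∏ j ∈ Finset.range (m + 1), (Nat.fib (n * k + 2 * j * n * q) : ℝ))
      atTop
      (𝓝 ((1 / (lucas (m * n * q) : ℝ)) *
        ∑ k ∈ Finset.Icc 1 (2 * q),
          ε k / ∏ j ∈ Finset.range m, (Nat.fib (n * k + 2 * j * n * q) : ℝ))) := by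
  have hL : (0:ℝ) < (lucas (m * n * q) : ℝ) := by exact_mod_cast lucas_pos _
  set L : ℝ := (lucas (m * n * q) : ℝ) with hLdef
  have hb : Odd (m * n * q) := by rw [mul_assoc]; exact hm.mul (hn.mul hq)
  set a : ℕ → ℝ := fun k => ε k / ∏ j ∈ Finset.range m, (Nat.fib (n * k + 2 * j * n * q) : ℝ)
    with ha
  -- per-term identity
  have key : ∀ k, 1 ≤ k →
      ε k * (Nat.fib (n * k + m * n * q) : ℝ) /
          ∏ j ∈ Finset.range (m + 1), (Nat.fib (n * k + 2 * j * n * q) : ℝ)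
        = (a k - a (k + 2 * q)) / L := by
    intro k hk
    have hfpos : ∀ j, (0:ℝ) < (Nat.fib (n * k + 2 * j * n * q) : ℝ) := by
      intro j
      have : 0 < n * k := Nat.mul_pos hn' hk
      exact_mod_cast Nat.fib_pos.mpr (by omega)
    set A : ℝ := ∏ j ∈ Finset.range m, (Nat.fib (n * k + 2 * j * n * q) : ℝ) with hAdef
    set P : ℝ := ∏ j ∈ Finset.range (m + 1), (Nat.fib (n * k + 2 * j * n * q) : ℝ) with hPdef
    have hApos : (0:ℝ) < A := Finset.prod_pos fun j _ => hfpos j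
    have hPpos : (0:ℝ) < P := Finset.prod_pos fun j _ => hfpos j
    have hP1 : P = A * (Nat.fib (n * k + 2 * m * n * q) : ℝ) := Finset.prod_range_succ _ m
    have hBeq : ∏ j ∈ Finset.range m, (Nat.fib (n * (k + 2 * q) + 2 * j * n * q) : ℝ)
        = ∏ j ∈ Finset.range m, (Nat.fib (n * k + 2 * (j + 1) * n * q) : ℝ) := by
      apply Finset.prod_congr rfl
      intro j _
      congr 2
      ring
    set B : ℝ := ∏ j ∈ Finset.range m, (Nat.fib (n * k + 2 * (j + 1) * n * q) : ℝ) with hBdef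
    have hBpos : (0:ℝ) < B := by
      apply Finset.prod_pos
      intro j _
      have : 0 < n * k := Nat.mul_pos hn' hk
      exact_mod_cast Nat.fib_pos.mpr (by omega)
    have hP2 : P = B * (Nat.fib (n * k + 2 * 0 * n * q) : ℝ) := Finset.prod_range_succ' _ m
    rw [show n * k + 2 * 0 * n * q = n * k from by ring] at hP2
    have hfibZ := fib_shift (m * n * q) hb (n * k)
    rw [show n * k + 2 * (m * n * q) = n * k + 2 * m * n * q from by ring] at hfibZ
    have hfib : (Nat.fib (n * k + 2 * m * n * q) : ℝ)
        = (Nat.fib (n * k) : ℝ) + L * (Nat.fib (n * k + m * n * q) : ℝ) := by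
      rw [hLdef]
      exact_mod_cast hfibZ
    have hF0pos : (0:ℝ) < (Nat.fib (n * k) : ℝ) := by
      have : 0 < n * k := Nat.mul_pos hn' hk
      exact_mod_cast Nat.fib_pos.mpr this
    have hak : a k = ε k * (Nat.fib (n * k + 2 * m * n * q) : ℝ) / P := by
      rw [ha]
      simp only
      rw [← hAdef, hP1]
      rw [mul_div_mul_right _ _ (ne_of_gt (hfpos m))]
    have hak2 : a (k + 2 * q) = ε k * (Nat.fib (n * k) : ℝ) / P := by
      rw [ha]
      simp only
      rw [hε k hk, hBeq, hP2]
      rw [mul_div_mul_right _ _ (ne_of_gt hF0pos)]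
    rw [hak, hak2, div_sub_div_same, hfib]
    field_simp
    ring
  -- reindexing Icc sums to range sums
  have hIcc : ∀ (M : ℕ) (f : ℕ → ℝ), ∑ k ∈ Finset.Icc 1 M, f k
      = ∑ i ∈ Finset.range M, f (1 + i) := by
    intro M f
    rw [← Finset.Ico_add_one_right_eq_Icc, Finset.sum_Ico_eq_sum_range]
    norm_num
  set g : ℕ → ℝ := fun i => a (1 + i) with hg
  -- a tends to zero
  have ha0 : Tendsto a atTop (𝓝 0) := by
    apply squeeze_zero_norm' (a := fun k => 1 / (Nat.fib k : ℝ))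
    · filter_upwards [eventually_ge_atTop 1] with k hk
      have hnk : 0 < n * k := Nat.mul_pos hn' hk
      have hfpos : ∀ j, (0:ℝ) < (Nat.fib (n * k + 2 * j * n * q) : ℝ) := by
        intro j
        exact_mod_cast Nat.fib_pos.mpr (by omega)
      have hApos : (0:ℝ) < ∏ j ∈ Finset.range m, (Nat.fib (n * k + 2 * j * n * q) : ℝ) :=
        Finset.prod_pos fun j _ => hfpos j
      have hF0pos : (0:ℝ) < (Nat.fib (n * k) : ℝ) := by
        exact_mod_cast Nat.fib_pos.mpr hnk
      have hFkpos : (0:ℝ) < (Nat.fib k : ℝ) := by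
        exact_mod_cast Nat.fib_pos.mpr hk
      have h1 : (Nat.fib (n * k) : ℝ)
          ≤ ∏ j ∈ Finset.range m, (Nat.fib (n * k + 2 * j * n * q) : ℝ) := by
        have h0mem : 0 ∈ Finset.range m := Finset.mem_range.mpr hm'
        have hones : ∀ j ∈ Finset.range m, 1 ≤ Nat.fib (n * k + 2 * j * n * q) := by
          intro j _
          exact Nat.fib_pos.mpr (by omega)
        have h1nat := Finset.single_le_prod' (f := fun j => Nat.fib (n * k + 2 * j * n * q))
          hones h0mem
        simp only [mul_zero, zero_mul, add_zero] at h1nat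
        exact_mod_cast h1nat
      have h2 : (Nat.fib k : ℝ) ≤ (Nat.fib (n * k) : ℝ) := by
        exact_mod_cast Nat.fib_mono (Nat.le_mul_of_pos_left k hn')
      have hb1 : ‖a k‖ ≤ 1 / (Nat.fib (n * k) : ℝ) := by
        rw [ha]
        simp only
        rw [Real.norm_eq_abs, abs_div, abs_of_pos hApos]
        exact div_le_div₀ zero_le_one (hεb k) hF0pos h1
      refine hb1.trans ?_
      exact one_div_le_one_div_of_le hFkpos h2
    · simp only [one_div]
      exact fib_tendsto.inv_tendsto_atTop
  -- tail tends to zero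
  have htail : Tendsto (fun N => ∑ i ∈ Finset.range (2 * q), g (N + i)) atTop (𝓝 0) := by
    have h0 : (0:ℝ) = ∑ _i ∈ Finset.range (2 * q), (0:ℝ) := by simp
    rw [h0]
    apply tendsto_finset_sum
    intro i _
    have hcomp := ha0.comp (tendsto_add_atTop_nat (i + 1))
    apply hcomp.congr
    intro N
    simp only [Function.comp, hg]
    congr 1
    omega
  -- the limit
  have hfinal : Tendsto (fun N => (∑ i ∈ Finset.range (2 * q), g i
      - ∑ i ∈ Finset.range (2 * q), g (N + i)) / L) atTop
      (𝓝 ((∑ i ∈ Finset.range (2 * q), g i - 0) / L)) :=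
    (tendsto_const_nhds.sub htail).div_const L
  rw [sub_zero] at hfinal
  have hval : (∑ i ∈ Finset.range (2 * q), g i) / L
      = (1 / L) * ∑ k ∈ Finset.Icc 1 (2 * q),
          ε k / ∏ j ∈ Finset.range m, (Nat.fib (n * k + 2 * j * n * q) : ℝ) := by
    rw [hIcc (2 * q) (fun k => ε k / ∏ j ∈ Finset.range m, (Nat.fib (n * k + 2 * j * n * q) : ℝ))]
    rw [one_div, inv_mul_eq_div]
  rw [← hval]
  apply Tendsto.congr' _ hfinal
  filter_upwards [eventually_ge_atTop (2 * q)] with N hN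
  rw [hIcc N (fun k => ε k * (Nat.fib (n * k + m * n * q) : ℝ) /
      ∏ j ∈ Finset.range (m + 1), (Nat.fib (n * k + 2 * j * n * q) : ℝ))]
  rw [← telescope g (2 * q) N hN, Finset.sum_div]
  apply Finset.sum_congr rfl
  intro i _
  rw [key (1 + i) (by omega)]
  congr 2
  rw [hg]
  simp only
  congr 1
  omega

/-- Theorem (`m`, `n`, `q` odd): both
`Σ_{k=1}^{∞} F_{nk+mnq} / (Π_{j=0}^{m} F_{nk+2jnq})
  = (1/L_{mnq}) Σ_{k=1}^{2q} 1/(Π_{j=0}^{m−1} F_{nk+2jnq})` and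
`Σ_{k=1}^{∞} (−1)^{k−1} F_{nk+mnq} / (Π_{j=0}^{m} F_{nk+2jnq})
  = (1/L_{mnq}) Σ_{k=1}^{2q} (−1)^{k−1}/(Π_{j=0}^{m−1} F_{nk+2jnq})`. -/
theorem stmt_15 (m n q : ℕ) (hm : Odd m) (hn : Odd n) (hq : Odd q)
    (hm' : 0 < m) (hn' : 0 < n) (hq' : 0 < q) :
    Tendsto (fun N => ∑ k ∈ Finset.Icc 1 N,
        (Nat.fib (n * k + m * n * q) : ℝ) /
          ∏ j ∈ Finset.range (m + 1), (Nat.fib (n * k + 2 * j * n * q) : ℝ))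
      atTop
      (𝓝 ((1 / (lucas (m * n * q) : ℝ)) *
        ∑ k ∈ Finset.Icc 1 (2 * q),
          (1 : ℝ) / ∏ j ∈ Finset.range m, (Nat.fib (n * k + 2 * j * n * q) : ℝ)))
    ∧
    Tendsto (fun N => ∑ k ∈ Finset.Icc 1 N,
        (-1 : ℝ) ^ (k - 1) * (Nat.fib (n * k + m * n * q) : ℝ) /
          ∏ j ∈ Finset.range (m + 1), (Nat.fib (n * k + 2 * j * n * q) : ℝ))
      atTop
      (𝓝 ((1 / (lucas (m * n * q) : ℝ)) *
        ∑ k ∈ Finset.Icc 1 (2 * q),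
          (-1 : ℝ) ^ (k - 1) / ∏ j ∈ Finset.range m, (Nat.fib (n * k + 2 * j * n * q) : ℝ))) := by
  constructor
  · have h := main_aux m n q hm hn hq hm' hn' hq' (fun _ => 1) (fun k _ => rfl)
      (fun k => by norm_num)
    simpa using h
  · exact main_aux m n q hm hn hq hm' hn' hq' (fun k => (-1 : ℝ) ^ (k - 1))
      (fun k hk => by
        have h1 : k + 2 * q - 1 = (k - 1) + 2 * q := by omega
        show (-1 : ℝ) ^ (k + 2 * q - 1) = (-1 : ℝ) ^ (k - 1)
        rw [h1, pow_add, (even_two_mul q).neg_one_pow, mul_one])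
      (fun k => by
        show |(-1 : ℝ) ^ (k - 1)| ≤ 1
        rw [abs_pow, abs_neg, abs_one, one_pow])
end

section
/- Let m, n, q be positive integers such that mnq is even. Then the series Σ_{k=1}^{∞} F_{2nk+mnq} / ( Π_{j=0}^{m} F_{nk+jnq}^2 ) converges, and its sum equals (1 / F_{mnq}) · Σ_{k=1}^{q} 1 / ( Π_{j=0}^{m−1} F_{nk+jnq}^2 ). -/
open Filter Topology goldenRatio

lemma fib_sq_sub (u d : ℕ) (hd : Even d) :
    (Nat.fib (u + d) : ℝ)^2 - (Nat.fib u : ℝ)^2 = (Nat.fib (2*u + d) : ℝ) * Nat.fib d := by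
  have h5 : Real.sqrt 5 ≠ 0 := by positivity
  have hsq : Real.sqrt 5 ^ 2 = 5 := Real.sq_sqrt (by norm_num)
  rw [Real.coe_fib_eq, Real.coe_fib_eq, Real.coe_fib_eq, Real.coe_fib_eq,
    pow_add, pow_add, two_mul, add_assoc, pow_add, pow_add, pow_add, pow_add]
  set P := φ^u with hP
  set S := ψ^u with hS
  set A := φ^d with hA
  set B := ψ^d with hB
  have hAB : A * B = 1 := by
    rw [hA, hB, ← mul_pow, Real.goldenRatio_mul_goldenConj, hd.neg_one_pow]
  clear_value P S A B
  field_simp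
  linear_combination ((Real.sqrt 5^2 - 1) * (2*P*S - P^2 - S^2) + Real.sqrt 5^2 * (P-S)^2) * hAB

/-- Theorem (`mnq` even):
`Σ_{k=1}^{∞} F_{2nk+mnq} / (Π_{j=0}^{m} F_{nk+jnq}^2)
  = (1/F_{mnq}) Σ_{k=1}^{q} 1/(Π_{j=0}^{m−1} F_{nk+jnq}^2)`. -/
theorem stmt_17 (m n q : ℕ) (hm : 0 < m) (hn : 0 < n) (hq : 0 < q)
    (heven : Even (m * n * q)) :
    Tendsto (fun N => ∑ k ∈ Finset.Icc 1 N,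
        (Nat.fib (2 * n * k + m * n * q) : ℝ) /
          ∏ j ∈ Finset.range (m + 1), (Nat.fib (n * k + j * n * q) : ℝ) ^ 2)
      atTop
      (𝓝 ((1 / (Nat.fib (m * n * q) : ℝ)) *
        ∑ k ∈ Finset.Icc 1 q,
          (1 : ℝ) / ∏ j ∈ Finset.range m, (Nat.fib (n * k + j * n * q) : ℝ) ^ 2)) := by
  -- basic positivity facts
  have hfib : ∀ t : ℕ, 1 ≤ t → (0:ℝ) < Nat.fib t := by
    intro t ht
    exact_mod_cast Nat.fib_pos.2 ht
  have hF : (0:ℝ) < Nat.fib (m*n*q) := hfib _ (Nat.one_le_iff_ne_zero.2 (by positivity))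
  set g : ℕ → ℝ := fun k => (∏ j ∈ Finset.range m, (Nat.fib (n*k + j*n*q) : ℝ)^2)⁻¹ with hg
  have hprodpos : ∀ (k : ℕ), 1 ≤ k → ∀ s : Finset ℕ,
      (0:ℝ) < ∏ j ∈ s, (Nat.fib (n*k + j*n*q) : ℝ)^2 := by
    intro k hk s
    apply Finset.prod_pos
    intro j _
    have : (0:ℝ) < Nat.fib (n*k + j*n*q) :=
      hfib _ (le_add_right (Nat.one_le_iff_ne_zero.2 (by positivity)))
    positivity
  -- pointwise telescoping identity
  have hpt : ∀ k : ℕ, 1 ≤ k →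
      (Nat.fib (2*n*k + m*n*q) : ℝ) / ∏ j ∈ Finset.range (m+1), (Nat.fib (n*k + j*n*q) : ℝ)^2
        = (g k - g (k+q)) / Nat.fib (m*n*q) := by
    intro k hk
    have hkey : (Nat.fib (n*k + m*n*q) : ℝ)^2 - (Nat.fib (n*k) : ℝ)^2
        = (Nat.fib (2*n*k + m*n*q) : ℝ) * Nat.fib (m*n*q) := by
      have := fib_sq_sub (n*k) (m*n*q) heven
      rwa [show 2*(n*k) + m*n*q = 2*n*k + m*n*q by ring] at this
    have h1 : ∏ j ∈ Finset.range (m+1), (Nat.fib (n*k + j*n*q) : ℝ)^2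
        = (∏ j ∈ Finset.range m, (Nat.fib (n*k + j*n*q) : ℝ)^2) * (Nat.fib (n*k + m*n*q) : ℝ)^2 :=
      Finset.prod_range_succ _ _
    have h2 : ∏ j ∈ Finset.range (m+1), (Nat.fib (n*k + j*n*q) : ℝ)^2
        = (∏ j ∈ Finset.range m, (Nat.fib (n*(k+q) + j*n*q) : ℝ)^2) * (Nat.fib (n*k) : ℝ)^2 := by
      rw [Finset.prod_range_succ' (fun j => (Nat.fib (n*k + j*n*q) : ℝ)^2)]
      congr 1
      · apply Finset.prod_congr rfl
        intro j _
        congr 3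
        ring
      · congr 2
        simp
    have hD0 : (0:ℝ) < ∏ j ∈ Finset.range m, (Nat.fib (n*k + j*n*q) : ℝ)^2 :=
      hprodpos k hk _
    have hD1 : (0:ℝ) < ∏ j ∈ Finset.range m, (Nat.fib (n*(k+q) + j*n*q) : ℝ)^2 :=
      hprodpos (k+q) (le_add_right hk) _
    have hP : (0:ℝ) < ∏ j ∈ Finset.range (m+1), (Nat.fib (n*k + j*n*q) : ℝ)^2 :=
      hprodpos k hk _
    simp only [hg]
    rw [div_eq_div_iff hP.ne' hF.ne']
    field_simp
    linear_combination (-(∏ j ∈ Finset.range m, (Nat.fib (n*k + j*n*q) : ℝ)^2) *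
        (∏ j ∈ Finset.range m, (Nat.fib (n*(k+q) + j*n*q) : ℝ)^2)) * hkey
      - (∏ j ∈ Finset.range m, (Nat.fib (n*(k+q) + j*n*q) : ℝ)^2) * h1
      + (∏ j ∈ Finset.range m, (Nat.fib (n*k + j*n*q) : ℝ)^2) * h2
  set C : ℝ := ∑ k ∈ Finset.Icc 1 q, g k with hC
  set T : ℕ → ℝ := fun N => ∑ k ∈ Finset.Ioc N (N+q), g k with hT
  have hsum : ∀ N, q ≤ N → ∑ k ∈ Finset.Icc 1 N, (g k - g (k+q)) = C - T N := by
    intro N hN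
    rw [Finset.sum_sub_distrib]
    have hshift : ∑ k ∈ Finset.Icc 1 N, g (k+q) = ∑ k ∈ Finset.Ioc q (N+q), g k := by
      rw [(show ∀ b : ℕ, Finset.Icc 1 b = Finset.Ioc 0 b from Finset.Icc_add_one_left_eq_Ioc 0), show Finset.Ioc q (N+q) = Finset.Ioc (0+q) (N+q) by rw [zero_add],
        ← Finset.map_add_right_Ioc, Finset.sum_map]
      rfl
    have e1 := Finset.sum_Ioc_consecutive g (Nat.zero_le N) (Nat.le_add_right N q)
    have e2 := Finset.sum_Ioc_consecutive g (Nat.zero_le q) (Nat.le_add_left q N)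
    rw [hshift, (show ∀ b : ℕ, Finset.Icc 1 b = Finset.Ioc 0 b from Finset.Icc_add_one_left_eq_Ioc 0), hC, hT, (show ∀ b : ℕ, Finset.Icc 1 b = Finset.Ioc 0 b from Finset.Icc_add_one_left_eq_Ioc 0)]
    linarith
  have htail : Tendsto T atTop (𝓝 0) := by
    apply squeeze_zero' (g := fun N : ℕ => (q:ℝ) / (N:ℕ)) _ _ (tendsto_const_div_atTop_nhds_zero_nat (q:ℝ))
    · filter_upwards with N
      apply Finset.sum_nonneg
      intro k hk
      have hk1 : 1 ≤ k := by have := (Finset.mem_Ioc.1 hk).1; omega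
      exact le_of_lt (inv_pos.2 (hprodpos k hk1 _))
    · filter_upwards [eventually_ge_atTop 5] with N hN5
      have hbound : ∀ k ∈ Finset.Ioc N (N+q), g k ≤ ((N:ℝ))⁻¹ := by
        intro k hk
        obtain ⟨hk1, hk2⟩ := Finset.mem_Ioc.1 hk
        have hkpos : 1 ≤ k := le_trans (by omega) hk1
        have h1 : (N:ℝ) ≤ (Nat.fib (n*k) : ℝ) := by
          have : N ≤ Nat.fib (n*k) :=
            le_trans (Nat.le_fib_self hN5) (Nat.fib_mono (le_trans (le_of_lt hk1) (Nat.le_mul_of_pos_left k hn)))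
          exact_mod_cast this
        have hfib1 : (1:ℝ) ≤ (Nat.fib (n*k) : ℝ) := by
          exact_mod_cast Nat.fib_pos.2 (Nat.one_le_iff_ne_zero.2 (by positivity))
        have h2 : (N:ℝ) ≤ (Nat.fib (n*k) : ℝ)^2 := by nlinarith
        have h3n : Nat.fib (n*k)^2 ≤ ∏ j ∈ Finset.range m, Nat.fib (n*k + j*n*q)^2 := by
          have := Finset.single_le_prod' (f := fun j => Nat.fib (n*k + j*n*q)^2)
            (fun j _ => Nat.one_le_iff_ne_zero.2 (by
              have h := Nat.fib_pos.2 (le_add_right (Nat.one_le_iff_ne_zero.2 (by positivity)) :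
                1 ≤ n*k + j*n*q)
              positivity)) (Finset.mem_range.2 hm)
          simpa using this
        have h3 : ((Nat.fib (n*k) : ℝ))^2 ≤ ∏ j ∈ Finset.range m, (Nat.fib (n*k + j*n*q) : ℝ)^2 := by
          exact_mod_cast h3n
        have hNpos : (0:ℝ) < N := by exact_mod_cast lt_of_lt_of_le (by norm_num) hN5
        have := inv_anti₀ hNpos (le_trans h2 h3)
        simpa [hg] using this
      calc T N ≤ (Finset.Ioc N (N+q)).card • ((N:ℝ))⁻¹ := Finset.sum_le_card_nsmul _ _ _ hbound
        _ = (q:ℝ) / N := by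
          rw [Nat.card_Ioc]
          simp [nsmul_eq_mul, div_eq_mul_inv]
  have heq : (fun N => ∑ k ∈ Finset.Icc 1 N,
      (Nat.fib (2*n*k + m*n*q) : ℝ) / ∏ j ∈ Finset.range (m+1), (Nat.fib (n*k + j*n*q) : ℝ)^2)
      =ᶠ[atTop] (fun N => (C - T N) / Nat.fib (m*n*q)) := by
    filter_upwards [eventually_ge_atTop q] with N hN
    rw [← hsum N hN, Finset.sum_div]
    exact Finset.sum_congr rfl fun k hk => hpt k (Finset.mem_Icc.1 hk).1
  have hlim : Tendsto (fun N => (C - T N) / (Nat.fib (m*n*q) : ℝ)) atTop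
      (𝓝 ((C - 0) / Nat.fib (m*n*q))) :=
    (tendsto_const_nhds.sub htail).div_const _
  rw [sub_zero] at hlim
  have hval : C / (Nat.fib (m*n*q) : ℝ)
      = (1 / (Nat.fib (m*n*q) : ℝ)) * ∑ k ∈ Finset.Icc 1 q,
          (1:ℝ) / ∏ j ∈ Finset.range m, (Nat.fib (n*k + j*n*q) : ℝ)^2 := by
    rw [hC, hg]
    simp [one_div, div_eq_mul_inv, mul_comm]
  rw [← hval]
  exact Tendsto.congr' heq.symm hlim
end

section
/- Let m, n, q be positive integers such that q is even or mnq is odd. Then the series Σ_{k=1}^{∞} (−1)^{k−1} · F_{2nk+mnq} / ( Π_{j=0}^{m} F_{nk+jnq}^2 ) converges, and its sum equals (1 / F_{mnq}) · Σ_{k=1}^{q} (−1)^{k−1} / ( Π_{j=0}^{m−1} F_{nk+jnq}^2 ). -/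
open Filter Topology

lemma fibZ_rec (n : ℕ) : (Nat.fib (n+2) : ℤ) = Nat.fib n + Nat.fib (n+1) := by
  rw [Nat.fib_add_two]; push_cast; ring

/-- Catalan-type identity: `F_{x+y}^2 = F_y F_{2x+y} + (-1)^y F_x^2` over `ℤ`. -/
lemma fib_sq_aux : ∀ y x : ℕ, ((Nat.fib (x + y) : ℤ))^2
    = Nat.fib y * Nat.fib (2*x + y) + (-1)^y * (Nat.fib x)^2 := by
  intro y
  induction y using Nat.strong_induction_on with
  | _ y ih =>
    match y with
    | 0 => intro x; simp
    | 1 =>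
      intro x
      have h := Nat.fib_two_mul_add_one x
      push_cast [h]
      ring
    | 2 =>
      intro x
      have hle : Nat.fib (x+1) ≤ 2 * Nat.fib ((x+1)+1) :=
        le_trans Nat.fib_le_fib_succ (by omega)
      have h2 : (Nat.fib (2*(x+1)) : ℤ)
          = Nat.fib (x+1) * (2 * Nat.fib (x+2) - Nat.fib (x+1)) := by
        rw [Nat.fib_two_mul, Nat.cast_mul, Nat.cast_sub hle]
        push_cast
        ring_nf
      have hx := fibZ_rec x
      rw [show 2*x+2 = 2*(x+1) by ring, h2]
      push_cast [Nat.fib_two]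
      linear_combination ((Nat.fib (x+2):ℤ) - (Nat.fib (x+1)) + (Nat.fib x)) * hx
    | (y+3) =>
      intro x
      have h0' : (Nat.fib (x+y) : ℤ)^2
          = Nat.fib y * Nat.fib (2*x+y) + (-1)^y * (Nat.fib x)^2 := ih y (by omega) x
      have h1' : (Nat.fib (x+y+1) : ℤ)^2
          = Nat.fib (y+1) * Nat.fib (2*x+y+1) + (-1)^(y+1) * (Nat.fib x)^2 := by
        have := ih (y+1) (by omega) x
        rw [show x+(y+1) = x+y+1 by ring, show 2*x+(y+1) = 2*x+y+1 by ring] at this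
        exact this
      have h2' : (Nat.fib (x+y+2) : ℤ)^2
          = Nat.fib (y+2) * Nat.fib (2*x+y+2) + (-1)^(y+2) * (Nat.fib x)^2 := by
        have := ih (y+2) (by omega) x
        rw [show x+(y+2) = x+y+2 by ring, show 2*x+(y+2) = 2*x+y+2 by ring] at this
        exact this
      have e1 : (Nat.fib (x+(y+3)) : ℤ) = Nat.fib (x+y+1) + Nat.fib (x+y+2) := by
        rw [show x+(y+3) = (x+y+1)+2 by ring]; exact fibZ_rec _
      have e2 : (Nat.fib (x+y+2) : ℤ) = Nat.fib (x+y) + Nat.fib (x+y+1) := fibZ_rec _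
      have e3 : (Nat.fib (y+3) : ℤ) = Nat.fib (y+1) + Nat.fib (y+2) := by
        rw [show y+3 = (y+1)+2 by ring]; exact fibZ_rec _
      have e4 : (Nat.fib (y+2) : ℤ) = Nat.fib y + Nat.fib (y+1) := fibZ_rec _
      have e5 : (Nat.fib (2*x+(y+3)) : ℤ) = Nat.fib (2*x+y+1) + Nat.fib (2*x+y+2) := by
        rw [show 2*x+(y+3) = (2*x+y+1)+2 by ring]; exact fibZ_rec _
      have e6 : (Nat.fib (2*x+y+2) : ℤ) = Nat.fib (2*x+y) + Nat.fib (2*x+y+1) := fibZ_rec _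
      rw [e2, e4, e6] at h2'
      rw [e1, e3, e5, e2, e4, e6]
      linear_combination 2*h2' + 2*h1' - h0'

lemma fib_sq_real (x y : ℕ) : ((Nat.fib (x + y) : ℝ))^2
    = Nat.fib y * Nat.fib (2*x + y) + (-1)^y * (Nat.fib x)^2 := by
  exact_mod_cast congrArg (fun z : ℤ => (z : ℝ)) (fib_sq_aux y x)

/-- Theorem (`q` even or `mnq` odd):
`Σ_{k=1}^{∞} (−1)^{k−1} F_{2nk+mnq} / (Π_{j=0}^{m} F_{nk+jnq}^2)
  = (1/F_{mnq}) Σ_{k=1}^{q} (−1)^{k−1}/(Π_{j=0}^{m−1} F_{nk+jnq}^2)`. -/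
theorem stmt_18 (m n q : ℕ) (hm : 0 < m) (hn : 0 < n) (hq : 0 < q)
    (h : Even q ∨ Odd (m * n * q)) :
    Tendsto (fun N => ∑ k ∈ Finset.Icc 1 N,
        (-1 : ℝ) ^ (k - 1) * (Nat.fib (2 * n * k + m * n * q) : ℝ) /
          ∏ j ∈ Finset.range (m + 1), (Nat.fib (n * k + j * n * q) : ℝ) ^ 2)
      atTop
      (𝓝 ((1 / (Nat.fib (m * n * q) : ℝ)) *
        ∑ k ∈ Finset.Icc 1 q,
          (-1 : ℝ) ^ (k - 1) / ∏ j ∈ Finset.range m, (Nat.fib (n * k + j * n * q) : ℝ) ^ 2)) := by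
  have fibpos : ∀ t : ℕ, 0 < t → (0:ℝ) < Nat.fib t := by
    intro t ht; exact_mod_cast Nat.fib_pos.mpr ht
  set g : ℝ := (Nat.fib (m*n*q) : ℝ) with hg
  have hgpos : 0 < g := fibpos _ (by positivity)
  set c : ℕ → ℝ := fun k =>
    (-1:ℝ)^(k-1) / (g * ∏ j ∈ Finset.range m, (Nat.fib (n*k + j*n*q) : ℝ)^2) with hc
  have hApos : ∀ k : ℕ, 0 < k → 0 < ∏ j ∈ Finset.range m, (Nat.fib (n*k + j*n*q) : ℝ)^2 := by
    intro k hk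
    apply Finset.prod_pos
    intro j _
    exact pow_pos (fibpos _ (by positivity)) 2
  -- sign fact
  have hsign : ((-1:ℝ))^(m*n*q) = (-1:ℝ)^q := by
    rcases h with he | ho
    · rw [Even.neg_one_pow he, Even.neg_one_pow (by exact he.mul_left _)]
    · have hq' : Odd q := by
        rcases Nat.even_or_odd q with h1 | h1
        · exact (Nat.not_odd_iff_even.mpr (h1.mul_left (m*n)) ho).elim
        · exact h1
      rw [Odd.neg_one_pow ho, Odd.neg_one_pow hq']
  -- per-term telescoping identity
  have hterm : ∀ k : ℕ, 0 < k →
      (-1 : ℝ) ^ (k - 1) * (Nat.fib (2 * n * k + m * n * q) : ℝ) /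
          ∏ j ∈ Finset.range (m + 1), (Nat.fib (n * k + j * n * q) : ℝ) ^ 2
        = c k - c (k + q) := by
    intro k hk
    have hB : (∏ j ∈ Finset.range m, (Nat.fib (n*(k+q) + j*n*q) : ℝ)^2)
        = ∏ j ∈ Finset.range m, (Nat.fib (n*k + (j+1)*n*q) : ℝ)^2 := by
      apply Finset.prod_congr rfl
      intro j _
      congr 2
      ring
    have hP1 : (∏ j ∈ Finset.range (m+1), (Nat.fib (n*k + j*n*q) : ℝ)^2)
        = (∏ j ∈ Finset.range m, (Nat.fib (n*k + j*n*q) : ℝ)^2)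
          * (Nat.fib (n*k + m*n*q) : ℝ)^2 := Finset.prod_range_succ _ m
    have hP2 : (∏ j ∈ Finset.range (m+1), (Nat.fib (n*k + j*n*q) : ℝ)^2)
        = (∏ j ∈ Finset.range m, (Nat.fib (n*k + (j+1)*n*q) : ℝ)^2)
          * (Nat.fib (n*k) : ℝ)^2 := by
      rw [Finset.prod_range_succ']
      congr 2
      simp
    have hkey : ((Nat.fib (n*k + m*n*q) : ℝ))^2
        = g * Nat.fib (2*n*k + m*n*q) + (-1:ℝ)^q * (Nat.fib (n*k))^2 := by
      have := fib_sq_real (n*k) (m*n*q)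
      rw [show 2*(n*k) + m*n*q = 2*n*k + m*n*q by ring, hsign] at this
      exact this
    have hsgn2 : ((-1:ℝ))^(k+q-1) = (-1:ℝ)^(k-1) * (-1:ℝ)^q := by
      rw [show k+q-1 = (k-1)+q by omega, pow_add]
    simp only [hc]
    rw [hB, hsgn2]
    have hA := hApos k hk
    have hB' : 0 < ∏ j ∈ Finset.range m, (Nat.fib (n*k + (j+1)*n*q) : ℝ)^2 := by
      apply Finset.prod_pos; intro j _; exact pow_pos (fibpos _ (by positivity)) 2
    have hP : 0 < ∏ j ∈ Finset.range (m+1), (Nat.fib (n*k + j*n*q) : ℝ)^2 := by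
      apply Finset.prod_pos; intro j _; exact pow_pos (fibpos _ (by positivity)) 2
    field_simp
    linear_combination
      (-((∏ j ∈ Finset.range m, (Nat.fib (n*k + (j+1)*n*q) : ℝ)^2))) * hP1
      + ((-1:ℝ)^q * (∏ j ∈ Finset.range m, (Nat.fib (n*k + j*n*q) : ℝ)^2)) * hP2
      - ((∏ j ∈ Finset.range m, (Nat.fib (n*k + j*n*q) : ℝ)^2)
          * (∏ j ∈ Finset.range m, (Nat.fib (n*k + (j+1)*n*q) : ℝ)^2)) * hkey
  -- partial sums telescope
  have hsum : ∀ N : ℕ, (∑ k ∈ Finset.Icc 1 N,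
      (-1 : ℝ) ^ (k - 1) * (Nat.fib (2 * n * k + m * n * q) : ℝ) /
        ∏ j ∈ Finset.range (m + 1), (Nat.fib (n * k + j * n * q) : ℝ) ^ 2)
      = (∑ k ∈ Finset.Icc 1 q, c k) - ∑ k ∈ Finset.Icc (N+1) (N+q), c k := by
    intro N
    rw [Finset.sum_congr rfl (fun k hk => hterm k (Finset.mem_Icc.mp hk).1)]
    rw [Finset.sum_sub_distrib]
    have h1 : (∑ k ∈ Finset.Icc 1 N, c (k+q)) = ∑ k ∈ Finset.Icc (1+q) (N+q), c k := by
      rw [← Finset.map_add_right_Icc, Finset.sum_map]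
      rfl
    rw [h1]
    have e : ∀ a b : ℕ, Finset.Icc a b = Finset.Ico a (b+1) :=
      fun a b => (Finset.Ico_add_one_right_eq_Icc a b).symm
    have t1 : (∑ k ∈ Finset.Ico 1 (N+1), c k) + ∑ k ∈ Finset.Ico (N+1) (N+q+1), c k
        = ∑ k ∈ Finset.Ico 1 (N+q+1), c k :=
      Finset.sum_Ico_consecutive _ (by omega) (by omega)
    have t2 : (∑ k ∈ Finset.Ico 1 (q+1), c k) + ∑ k ∈ Finset.Ico (q+1) (N+q+1), c k
        = ∑ k ∈ Finset.Ico 1 (N+q+1), c k :=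
      Finset.sum_Ico_consecutive _ (by omega) (by omega)
    rw [show 1+q = q+1 by ring, e, e, e, e, show N+q+1 = N+q+1 from rfl]
    linarith [t1, t2]
  -- the tail tends to zero
  have hc0 : Tendsto c atTop (𝓝 0) := by
    apply squeeze_zero_norm' (a := fun j : ℕ => 1/(j:ℝ))
      ?_ tendsto_one_div_atTop_nhds_zero_nat
    filter_upwards [eventually_ge_atTop 5] with j hj
    have hj0 : 0 < j := by omega
    have hAj := hApos j hj0
    have hfj : (j:ℝ) ≤ (Nat.fib (n*j) : ℝ) := by
      have h5 : 5 ≤ n*j := le_trans hj (Nat.le_mul_of_pos_left j hn)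
      have : j ≤ Nat.fib (n*j) :=
        le_trans (Nat.le_mul_of_pos_left j hn) (Nat.le_fib_self h5)
      exact_mod_cast this
    have hA_ge : (j:ℝ) ≤ ∏ i ∈ Finset.range m, (Nat.fib (n*j + i*n*q) : ℝ)^2 := by
      have hnat : j ≤ ∏ i ∈ Finset.range m, (Nat.fib (n*j + i*n*q))^2 := by
        have h0m : 0 ∈ Finset.range m := Finset.mem_range.mpr hm
        have hone : ∀ i ∈ Finset.range m, 1 ≤ (Nat.fib (n*j + i*n*q))^2 := by
          intro i _
          have h1 : 1 ≤ Nat.fib (n*j + i*n*q) := Nat.fib_pos.mpr (by positivity)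
          exact Nat.one_le_pow _ _ h1
        have hsingle := Finset.single_le_prod' hone h0m
        have h00 : Nat.fib (n*j + 0*n*q) = Nat.fib (n*j) := by norm_num
        rw [h00] at hsingle
        have hjf : j ≤ Nat.fib (n*j) := by exact_mod_cast hfj
        have : j ≤ Nat.fib (n*j)^2 :=
          le_trans hjf (Nat.le_self_pow (by norm_num) _)
        omega
      calc (j:ℝ) ≤ ((∏ i ∈ Finset.range m, (Nat.fib (n*j + i*n*q))^2 : ℕ) : ℝ) := by
            exact_mod_cast hnat
        _ = _ := by push_cast; rfl
    have hg1 : (1:ℝ) ≤ g := by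
      have h1 : 1 ≤ Nat.fib (m*n*q) := Nat.fib_pos.mpr (by positivity)
      rw [hg]
      exact_mod_cast h1
    have hnorm : ‖c j‖ = 1 / (g * ∏ i ∈ Finset.range m, (Nat.fib (n*j + i*n*q) : ℝ)^2) := by
      simp only [hc, Real.norm_eq_abs, abs_div, abs_pow, abs_neg, abs_one, one_pow]
      rw [abs_of_pos (by positivity)]
    rw [hnorm]
    apply one_div_le_one_div_of_le (by exact_mod_cast hj0)
    nlinarith
  have hR : Tendsto (fun N => ∑ k ∈ Finset.Icc (N+1) (N+q), c k) atTop (𝓝 0) := by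
    have hre : ∀ N : ℕ, (∑ k ∈ Finset.Icc (N+1) (N+q), c k)
        = ∑ i ∈ Finset.Icc 1 q, c (i + N) := by
      intro N
      have : Finset.Icc (N+1) (N+q) = (Finset.Icc 1 q).map (addRightEmbedding N) := by
        rw [Finset.map_add_right_Icc]
        congr 1 <;> omega
      rw [this, Finset.sum_map]
      rfl
    have h0 : (0:ℝ) = ∑ i ∈ Finset.Icc 1 q, (0:ℝ) := by simp
    rw [show (fun N => ∑ k ∈ Finset.Icc (N+1) (N+q), c k)
        = fun N => ∑ i ∈ Finset.Icc 1 q, c (i + N) from funext hre, h0]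
    apply tendsto_finset_sum
    intro i _
    exact hc0.comp (tendsto_atTop_mono (fun N => Nat.le_add_left N i) tendsto_id)
  have hTval : (∑ k ∈ Finset.Icc 1 q, c k)
      = (1 / g) * ∑ k ∈ Finset.Icc 1 q,
          (-1:ℝ)^(k-1) / ∏ j ∈ Finset.range m, (Nat.fib (n*k + j*n*q) : ℝ)^2 := by
    rw [Finset.mul_sum]
    apply Finset.sum_congr rfl
    intro k _
    simp only [hc]
    rw [div_mul_div_comm, one_mul]
  have final := Tendsto.congr (fun N => (hsum N).symm)
    ((tendsto_const_nhds (x := ∑ k ∈ Finset.Icc 1 q, c k)).sub hR)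
  rw [sub_zero, hTval] at final
  exact final
end

section
/- Let m, n, q be positive integers such that mnq is even, and let p be a non-negative integer. Then the series Σ_{k=1}^{∞} F_{2nk+mnq+np} / ( Π_{j=0}^{m} ( F_{nk+jnq} · F_{nk+jnq+np} ) ) converges, and its sum equals (1 / F_{mnq}) · Σ_{k=1}^{q} 1 / ( Π_{j=0}^{m−1} ( F_{nk+jnq} · F_{nk+jnq+np} ) ). -/
open Filter Topology

open goldenRatio in
lemma fib_real_id' (a b c : ℕ) (hc : Even c) :
    (Nat.fib (a+c) : ℝ) * Nat.fib (b+c) - Nat.fib a * Nat.fib b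
      = Nat.fib c * Nat.fib (a+b+c) := by
  have h5 : (Real.sqrt 5) ≠ 0 := by positivity
  have hc' : φ ^ c * ψ ^ c = 1 := by
    rw [← mul_pow, Real.goldenRatio_mul_goldenConj, hc.neg_one_pow]
  simp only [Real.coe_fib_eq, pow_add]
  generalize Real.goldenRatio = x at *
  generalize Real.goldenConj = y at *
  field_simp
  linear_combination (x^a*x^b + y^a*y^b - x^a*y^b - y^a*x^b) * hc'

lemma fib_tendsto_atTop' : Tendsto Nat.fib atTop atTop := by
  apply tendsto_atTop_atTop_of_monotone Nat.fib_mono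
  intro b
  exact ⟨b + 1, by have := Nat.le_fib_add_one (b + 1); omega⟩


/-- Theorem (`mnq` even, `p ≥ 0`):
`Σ_{k=1}^{∞} F_{2nk+mnq+np} / (Π_{j=0}^{m} F_{nk+jnq} F_{nk+jnq+np})
  = (1/F_{mnq}) Σ_{k=1}^{q} 1/(Π_{j=0}^{m−1} F_{nk+jnq} F_{nk+jnq+np})`. -/
theorem stmt_19 (m n q p : ℕ) (hm : 0 < m) (hn : 0 < n) (hq : 0 < q)
    (heven : Even (m * n * q)) :
    Tendsto (fun N => ∑ k ∈ Finset.Icc 1 N,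
        (Nat.fib (2 * n * k + m * n * q + n * p) : ℝ) /
          ∏ j ∈ Finset.range (m + 1),
            ((Nat.fib (n * k + j * n * q) : ℝ) * (Nat.fib (n * k + j * n * q + n * p) : ℝ)))
      atTop
      (𝓝 ((1 / (Nat.fib (m * n * q) : ℝ)) *
        ∑ k ∈ Finset.Icc 1 q,
          (1 : ℝ) / ∏ j ∈ Finset.range m,
            ((Nat.fib (n * k + j * n * q) : ℝ) * (Nat.fib (n * k + j * n * q + n * p) : ℝ)))) := by
  set X : ℕ → ℕ → ℝ := fun k j =>
    (Nat.fib (n * k + j * n * q) : ℝ) * (Nat.fib (n * k + j * n * q + n * p) : ℝ) with hX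
  set a : ℕ → ℝ := fun k => 1 / ∏ j ∈ Finset.range m, X k j with ha
  have hfibc : (0:ℝ) < (Nat.fib (m * n * q) : ℝ) := by
    exact_mod_cast Nat.fib_pos.2 (by positivity)
  have hXpos : ∀ k j, 1 ≤ k → 0 < X k j := by
    intro k j hk
    have h1 : 0 < Nat.fib (n * k + j * n * q) := Nat.fib_pos.2 (by positivity)
    have h2 : 0 < Nat.fib (n * k + j * n * q + n * p) := Nat.fib_pos.2 (by positivity)
    exact mul_pos (by exact_mod_cast h1) (by exact_mod_cast h2)
  have hQpos : ∀ k, 1 ≤ k → 0 < ∏ j ∈ Finset.range m, X k j := fun k hk =>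
    Finset.prod_pos fun j _ => hXpos k j hk
  have hPpos : ∀ k, 1 ≤ k → 0 < ∏ j ∈ Finset.range (m+1), X k j := fun k hk =>
    Finset.prod_pos fun j _ => hXpos k j hk
  -- shift of a
  have hashift : ∀ k, a (k + q) = 1 / ∏ j ∈ Finset.range m, X k (j + 1) := by
    intro k
    simp only [ha, hX]
    congr 1
    apply Finset.prod_congr rfl
    intro j _
    have h1 : n * (k + q) + j * n * q = n * k + (j + 1) * n * q := by ring
    rw [h1]
  -- per-term identity
  have hterm : ∀ k, 1 ≤ k →
      (Nat.fib (2 * n * k + m * n * q + n * p) : ℝ) / ∏ j ∈ Finset.range (m+1), X k j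
        = (a k - a (k + q)) / (Nat.fib (m * n * q) : ℝ) := by
    intro k hk
    have hQ := hQpos k hk
    have hP := hPpos k hk
    have hXm := hXpos k m hk
    have hX0 := hXpos k 0 hk
    have h1 : a k = X k m / ∏ j ∈ Finset.range (m+1), X k j := by
      rw [ha, Finset.prod_range_succ]
      field_simp
    have h2 : a (k + q) = X k 0 / ∏ j ∈ Finset.range (m+1), X k j := by
      rw [hashift, Finset.prod_range_succ']
      have hQ' : 0 < ∏ j ∈ Finset.range m, X k (j+1) :=
        Finset.prod_pos fun j _ => hXpos k (j+1) hk
      field_simp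
    have hid : X k m - X k 0
        = (Nat.fib (m * n * q) : ℝ) * Nat.fib (2 * n * k + m * n * q + n * p) := by
      have := fib_real_id' (n * k) (n * k + n * p) (m * n * q) heven
      simp only [show n * k + n * p + m * n * q = n * k + m * n * q + n * p from by ring,
        show n * k + (n * k + n * p) + m * n * q = 2 * n * k + m * n * q + n * p from by ring]
        at this
      simp only [hX]
      rw [← this]
      simp only [Nat.zero_mul, Nat.add_zero, Nat.zero_add]
    rw [h1, h2, div_sub_div_same, hid]
    field_simp
  -- sums as telescopes, for N ≥ q
  have hIcc : ∀ N : ℕ, Finset.Icc 1 N = Finset.Ioc 0 N := fun N => Finset.Icc_add_one_left_eq_Ioc 0 N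
  have hsum : ∀ N, q ≤ N →
      (∑ k ∈ Finset.Icc 1 N,
        (Nat.fib (2 * n * k + m * n * q + n * p) : ℝ) / ∏ j ∈ Finset.range (m+1), X k j)
      = (1 / (Nat.fib (m * n * q) : ℝ)) *
          ((∑ k ∈ Finset.Icc 1 q, a k) - ∑ k ∈ Finset.Ioc N (N + q), a k) := by
    intro N hN
    rw [Finset.sum_congr rfl (fun k hk => hterm k (Finset.mem_Icc.1 hk).1)]
    have hshift : (∑ k ∈ Finset.Ioc 0 N, a (k + q)) = ∑ k ∈ Finset.Ioc q (N + q), a k := by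
      rw [show Finset.Ioc q (N + q) = Finset.Ioc (0 + q) (N + q) from by rw [Nat.zero_add],
        ← Finset.map_add_right_Ioc, Finset.sum_map]
      simp [addRightEmbedding]
    have hsplit1 : (∑ k ∈ Finset.Ioc 0 q, a k) + ∑ k ∈ Finset.Ioc q N, a k
        = ∑ k ∈ Finset.Ioc 0 N, a k := Finset.sum_Ioc_consecutive _ (Nat.zero_le q) hN
    have hsplit2 : (∑ k ∈ Finset.Ioc q N, a k) + ∑ k ∈ Finset.Ioc N (N + q), a k
        = ∑ k ∈ Finset.Ioc q (N + q), a k :=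
      Finset.sum_Ioc_consecutive _ hN (Nat.le_add_right N q)
    rw [hIcc, hIcc q]
    simp only [div_eq_mul_inv, ← Finset.sum_mul, one_mul]
    rw [Finset.sum_sub_distrib, hshift, ← hsplit1, ← hsplit2]
    ring
  -- a tends to 0
  have ha0 : Tendsto a atTop (𝓝 0) := by
    have hbound : ∀ᶠ k in atTop, a k ≤ 1 / (Nat.fib k : ℝ) := by
      filter_upwards [eventually_ge_atTop 1] with k hk
      have hQ := hQpos k hk
      have hle : (Nat.fib k : ℝ) ≤ ∏ j ∈ Finset.range m, X k j := by
        obtain ⟨t, rfl⟩ : ∃ t, m = t + 1 := ⟨m - 1, by omega⟩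
        rw [Finset.prod_range_succ']
        have h1 : (1:ℝ) ≤ ∏ j ∈ Finset.range t, X k (j + 1) := by
          calc (1:ℝ) = ∏ _j ∈ Finset.range t, (1:ℝ) := by simp
            _ ≤ ∏ j ∈ Finset.range t, X k (j + 1) := by
              apply Finset.prod_le_prod (fun j _ => zero_le_one) (fun j _ => ?_)
              have ha1 : 1 ≤ Nat.fib (n * k + (j+1) * n * q) := Nat.fib_pos.2 (by positivity)
              have ha2 : 1 ≤ Nat.fib (n * k + (j+1) * n * q + n * p) :=
                Nat.fib_pos.2 (by positivity)
              have : (1:ℝ) * 1 ≤ X k (j+1) :=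
                mul_le_mul (by exact_mod_cast ha1) (by exact_mod_cast ha2) zero_le_one
                  (by exact_mod_cast Nat.zero_le _)
              simpa using this
        have h2 : (Nat.fib k : ℝ) ≤ X k 0 := by
          simp only [hX, Nat.zero_mul, Nat.add_zero, Nat.zero_add]
          have hf1 : Nat.fib k ≤ Nat.fib (n * k) := Nat.fib_mono (Nat.le_mul_of_pos_left k hn)
          have hf2 : 1 ≤ Nat.fib (n * k + n * p) := Nat.fib_pos.2 (by positivity)
          calc (Nat.fib k : ℝ) ≤ (Nat.fib (n * k) : ℝ) := by exact_mod_cast hf1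
            _ = (Nat.fib (n * k) : ℝ) * 1 := by ring
            _ ≤ (Nat.fib (n * k) : ℝ) * (Nat.fib (n * k + n * p) : ℝ) := by
                apply mul_le_mul_of_nonneg_left (by exact_mod_cast hf2)
                  (by exact_mod_cast Nat.zero_le _)
        calc (Nat.fib k : ℝ) ≤ X k 0 := h2
          _ = 1 * X k 0 := by ring
          _ ≤ (∏ j ∈ Finset.range t, X k (j + 1)) * X k 0 :=
              mul_le_mul_of_nonneg_right h1 (le_of_lt (hXpos k 0 hk))
      rw [ha]
      apply one_div_le_one_div_of_le _ hle
      exact_mod_cast Nat.fib_pos.2 hk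
    have hnonneg : ∀ k, 0 ≤ a k := by
      intro k
      apply div_nonneg zero_le_one
      exact Finset.prod_nonneg fun j _ =>
        mul_nonneg (by exact_mod_cast Nat.zero_le _) (by exact_mod_cast Nat.zero_le _)
    have hlim : Tendsto (fun k => 1 / (Nat.fib k : ℝ)) atTop (𝓝 0) := by
      simp only [one_div]
      exact tendsto_inv_atTop_zero.comp
        (tendsto_natCast_atTop_atTop.comp fib_tendsto_atTop')
    exact squeeze_zero' (Eventually.of_forall hnonneg) hbound hlim
  -- tail tends to 0
  have htail : Tendsto (fun N => ∑ k ∈ Finset.Ioc N (N + q), a k) atTop (𝓝 0) := by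
    have hrw : ∀ N : ℕ, (∑ k ∈ Finset.Ioc N (N + q), a k)
        = ∑ i ∈ Finset.range q, a (N + 1 + i) := by
      intro N
      rw [← Finset.Ico_add_one_add_one_eq_Ioc, Finset.sum_Ico_eq_sum_range]
      simp
    simp only [hrw]
    have : Tendsto (fun N => ∑ i ∈ Finset.range q, a (N + 1 + i)) atTop
        (𝓝 (∑ i ∈ Finset.range q, (0:ℝ))) := by
      apply tendsto_finset_sum
      intro i _
      have hmono : Tendsto (fun N : ℕ => N + 1 + i) atTop atTop :=
        tendsto_atTop_atTop_of_monotone (fun x y h => by omega) (fun b => ⟨b, by omega⟩)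
      exact ha0.comp hmono
    simpa using this
  -- conclude
  have hfinal : Tendsto (fun N => (1 / (Nat.fib (m * n * q) : ℝ)) *
      ((∑ k ∈ Finset.Icc 1 q, a k) - ∑ k ∈ Finset.Ioc N (N + q), a k)) atTop
      (𝓝 ((1 / (Nat.fib (m * n * q) : ℝ)) * ((∑ k ∈ Finset.Icc 1 q, a k) - 0))) :=
    (tendsto_const_nhds.sub htail).const_mul _
  rw [sub_zero] at hfinal
  apply hfinal.congr'
  filter_upwards [eventually_ge_atTop q] with N hN
  exact (hsum N hN).symm
end
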